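/- arXiv:2305.04698 — 2 statements merged into one kernel-verified Lean document; each statement's English description precedes it below -/
import Mathlib

section
/- Let a = (a_0, …, a_{L−1}) be a complex-valued sequence of length L with unimodular entries (|a_k| = 1 for all k), let S ≥ 1 be an integer, and let ζ = exp(2π√−1/S). Then for every complex number z with |z| = 1, Σ_{u=0}^{S−1} |Σ_{k=0}^{L−1} a_k · ζ^{k·u} · z^k|² = L·S + 2·S·Re(Σ_{τ : 0 < τ < L, S ∣ τ} ρ(a)(τ) · z^{−τ}). -/
open Finset

/-- Aperiodic autocorrelation of a sequence of length `L` at shift `τ`. -/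
noncomputable def aacf (L : ℕ) (a : ℕ → ℂ) (τ : ℕ) : ℂ :=
  ∑ i ∈ Finset.range (L - τ), a i * (starRingEnd ℂ) (a (i + τ))

private lemma geom_aux (x : ℂ) (S : ℕ) (hx : x ^ S = 1) :
    ∑ u ∈ Finset.range S, x ^ u = if x = 1 then (S : ℂ) else 0 := by
  split_ifs with h
  · simp [h]
  · rw [geom_sum_eq h, hx]
    simp

private lemma tri (L : ℕ) (F : ℕ → ℕ → ℂ) :
    ∑ p ∈ (Finset.range L ×ˢ Finset.range L).filter (fun p => p.2 < p.1), F p.1 p.2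
      = ∑ τ ∈ Finset.Ioo 0 L, ∑ i ∈ Finset.range (L - τ), F (i + τ) i := by
  rw [Finset.sum_sigma' (Finset.Ioo 0 L) (fun τ => Finset.range (L - τ)) (fun τ i => F (i + τ) i)]
  apply Finset.sum_nbij' (i := fun p => (⟨p.1 - p.2, p.2⟩ : Σ _ : ℕ, ℕ))
    (j := fun x => (x.2 + x.1, x.2))
  · intro p hp
    simp only [Finset.mem_filter, Finset.mem_product, Finset.mem_range] at hp
    simp only [Finset.mem_sigma, Finset.mem_Ioo, Finset.mem_range]
    omega
  · intro x hx
    simp only [Finset.mem_sigma, Finset.mem_Ioo, Finset.mem_range] at hx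
    simp only [Finset.mem_filter, Finset.mem_product, Finset.mem_range]
    omega
  · intro p hp
    simp only [Finset.mem_filter, Finset.mem_product, Finset.mem_range] at hp
    have h1 : p.2 + (p.1 - p.2) = p.1 := by omega
    simp [h1]
  · intro x hx
    simp only [Finset.mem_sigma, Finset.mem_Ioo, Finset.mem_range] at hx
    simp only [Sigma.ext_iff]
    exact ⟨by omega, heq_of_eq rfl⟩
  · intro p hp
    simp only [Finset.mem_filter, Finset.mem_product, Finset.mem_range] at hp
    have h1 : p.2 + (p.1 - p.2) = p.1 := by omega
    rw [h1]

private lemma swap_tri (L : ℕ) (F : ℕ → ℕ → ℂ) :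
    ∑ p ∈ (Finset.range L ×ˢ Finset.range L).filter (fun p => p.1 < p.2), F p.1 p.2
      = ∑ p ∈ (Finset.range L ×ˢ Finset.range L).filter (fun p => p.2 < p.1), F p.2 p.1 := by
  apply Finset.sum_nbij' (i := fun p => Prod.swap p) (j := fun p => Prod.swap p) <;>
    simp [Finset.mem_filter, Finset.mem_product, and_comm]

private lemma diag_sum (L : ℕ) (F : ℕ → ℕ → ℂ) :
    ∑ p ∈ (Finset.range L ×ˢ Finset.range L).filter (fun p => ¬ p.2 < p.1 ∧ ¬ p.1 < p.2), F p.1 p.2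
      = ∑ k ∈ Finset.range L, F k k := by
  apply Finset.sum_nbij' (i := fun p => p.1) (j := fun k => (k, k))
  · intro p hp
    simp only [Finset.mem_filter, Finset.mem_product, Finset.mem_range] at hp ⊢
    omega
  · intro k hk
    simp only [Finset.mem_range] at hk
    simp only [Finset.mem_filter, Finset.mem_product, Finset.mem_range]
    omega
  · intro p hp
    simp only [Finset.mem_filter, Finset.mem_product, Finset.mem_range] at hp
    have : p.2 = p.1 := by omega
    simp [Prod.ext_iff, this]
  · intro k hk
    rfl
  · intro p hp
    simp only [Finset.mem_filter, Finset.mem_product, Finset.mem_range] at hp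
    have h1 : p.2 = p.1 := by omega
    rw [h1]

private lemma split3 (s : Finset (ℕ × ℕ)) (F : ℕ × ℕ → ℂ) :
    ∑ p ∈ s, F p
      = ∑ p ∈ s.filter (fun p => p.2 < p.1), F p
        + ∑ p ∈ s.filter (fun p => p.1 < p.2), F p
        + ∑ p ∈ s.filter (fun p => ¬ p.2 < p.1 ∧ ¬ p.1 < p.2), F p := by
  have hf : (s.filter (fun p => ¬ p.2 < p.1)).filter (fun p => p.1 < p.2)
      = s.filter (fun p => p.1 < p.2) := by
    ext p
    simp only [Finset.mem_filter]
    exact ⟨fun h => ⟨h.1.1, h.2⟩, fun h => ⟨⟨h.1, by omega⟩, h.2⟩⟩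
  have h2 : ∑ p ∈ s.filter (fun p => ¬ p.2 < p.1), F p
      = ∑ p ∈ s.filter (fun p => p.1 < p.2), F p
        + ∑ p ∈ s.filter (fun p => ¬ p.2 < p.1 ∧ ¬ p.1 < p.2), F p := by
    rw [← Finset.sum_filter_add_sum_filter_not (s.filter (fun p => ¬ p.2 < p.1))
      (fun p => p.1 < p.2) F, hf, Finset.filter_filter]
  rw [← Finset.sum_filter_add_sum_filter_not s (fun p => p.2 < p.1) F, h2, add_assoc]

theorem stmt8 (L S : ℕ) (hL : 0 < L) (hS : 0 < S) (a : ℕ → ℂ)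
    (hunit : ∀ k < L, ‖a k‖ = 1)
    (ζ : ℂ) (hζ : ζ = Complex.exp (2 * (Real.pi : ℂ) * Complex.I / (S : ℂ)))
    (z : ℂ) (hz : ‖z‖ = 1) :
    ∑ u ∈ Finset.range S,
      ‖∑ k ∈ Finset.range L, a k * ζ ^ (k * u) * z ^ k‖ ^ 2
      = (L : ℝ) * S + 2 * S *
        (∑ τ ∈ (Finset.Ioo 0 L).filter (fun τ => S ∣ τ),
          aacf L a τ * z ^ (-(τ : ℤ))).re := by
  have hprim : IsPrimitiveRoot ζ S := hζ ▸ Complex.isPrimitiveRoot_exp S hS.ne'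
  have hζ0 : ζ ≠ 0 := by rw [hζ]; exact Complex.exp_ne_zero _
  have hζabs : ‖ζ‖ = 1 :=
    Complex.norm_eq_one_of_pow_eq_one hprim.pow_eq_one hS.ne'
  have hz0 : z ≠ 0 := by
    intro h; rw [h] at hz; simp at hz
  have hconjz : (starRingEnd ℂ) z = z⁻¹ := by
    rw [Complex.inv_def]; simp [Complex.normSq_eq_norm_sq, hz]
  have hconjζ : (starRingEnd ℂ) ζ = ζ⁻¹ := by
    rw [Complex.inv_def]; simp [Complex.normSq_eq_norm_sq, hζabs]
  set b : ℕ → ℂ := fun k => a k * z ^ k with hb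
  set T : ℂ := ∑ τ ∈ (Finset.Ioo 0 L).filter (fun τ => S ∣ τ),
      aacf L a τ * z ^ (-(τ : ℤ)) with hT
  -- aacf of b equals aacf of a times z^{-τ}
  have haacfb : ∀ τ : ℕ, aacf L b τ = aacf L a τ * z ^ (-(τ : ℤ)) := by
    intro τ
    rw [aacf, aacf, Finset.sum_mul]
    refine Finset.sum_congr rfl fun i _ => ?_
    simp only [hb, map_mul, map_pow, hconjz, inv_pow]
    rw [zpow_neg, zpow_natCast]
    have hzz : z ^ i * (z ^ (i + τ))⁻¹ = (z ^ τ)⁻¹ := by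
      rw [pow_add]
      field_simp
    calc a i * z ^ i * ((starRingEnd ℂ) (a (i + τ)) * (z ^ (i + τ))⁻¹)
        = a i * (starRingEnd ℂ) (a (i + τ)) * (z ^ i * (z ^ (i + τ))⁻¹) := by ring
      _ = a i * (starRingEnd ℂ) (a (i + τ)) * (z ^ τ)⁻¹ := by rw [hzz]
  -- power manipulation for ζ
  have hpow : ∀ k l u : ℕ, ζ ^ (k * u) * ((starRingEnd ℂ) ζ) ^ (l * u)
      = (ζ ^ ((k : ℤ) - l)) ^ u := by
    intro k l u
    rw [hconjζ, ← zpow_natCast (ζ ^ ((k : ℤ) - l)) u, ← zpow_mul, sub_mul,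
      zpow_sub₀ hζ0, inv_pow, ← zpow_natCast ζ (k * u), ← zpow_natCast ζ (l * u)]
    push_cast
    rw [div_eq_mul_inv]
  -- geometric sum for ζ powers
  have hgeom : ∀ m : ℤ, ∑ u ∈ Finset.range S, (ζ ^ m) ^ u
      = if (S : ℤ) ∣ m then (S : ℂ) else 0 := by
    intro m
    rw [geom_aux]
    · congr 1
      · exact propext (hprim.zpow_eq_one_iff_dvd m)
    · rw [← zpow_natCast (ζ ^ m) S, ← zpow_mul, mul_comm, zpow_mul, zpow_natCast,
        hprim.pow_eq_one, one_zpow]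
  -- the main complex identity
  have key : ∑ u ∈ Finset.range S,
      (∑ k ∈ Finset.range L, b k * ζ ^ (k * u)) *
        (starRingEnd ℂ) (∑ k ∈ Finset.range L, b k * ζ ^ (k * u))
      = (S : ℂ) * ((L : ℂ) + ((starRingEnd ℂ) (∑ τ ∈ (Finset.Ioo 0 L).filter (fun τ => S ∣ τ), aacf L b τ)
          + ∑ τ ∈ (Finset.Ioo 0 L).filter (fun τ => S ∣ τ), aacf L b τ)) := by
    have step1 : ∀ u : ℕ, (∑ k ∈ Finset.range L, b k * ζ ^ (k * u)) *
        (starRingEnd ℂ) (∑ k ∈ Finset.range L, b k * ζ ^ (k * u))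
        = ∑ k ∈ Finset.range L, ∑ l ∈ Finset.range L,
            (b k * (starRingEnd ℂ) (b l)) * (ζ ^ ((k : ℤ) - l)) ^ u := by
      intro u
      rw [map_sum, Finset.sum_mul_sum]
      refine Finset.sum_congr rfl fun k _ => Finset.sum_congr rfl fun l _ => ?_
      rw [map_mul, map_pow, ← hpow k l u]
      ring
    calc ∑ u ∈ Finset.range S, (∑ k ∈ Finset.range L, b k * ζ ^ (k * u)) *
          (starRingEnd ℂ) (∑ k ∈ Finset.range L, b k * ζ ^ (k * u))
        = ∑ u ∈ Finset.range S, ∑ k ∈ Finset.range L, ∑ l ∈ Finset.range L,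
            (b k * (starRingEnd ℂ) (b l)) * (ζ ^ ((k : ℤ) - l)) ^ u := by
          exact Finset.sum_congr rfl fun u _ => step1 u
      _ = ∑ k ∈ Finset.range L, ∑ l ∈ Finset.range L,
            (b k * (starRingEnd ℂ) (b l)) * ∑ u ∈ Finset.range S, (ζ ^ ((k : ℤ) - l)) ^ u := by
          rw [Finset.sum_comm]
          refine Finset.sum_congr rfl fun k _ => ?_
          rw [Finset.sum_comm]
          refine Finset.sum_congr rfl fun l _ => ?_
          rw [Finset.mul_sum]
      _ = ∑ k ∈ Finset.range L, ∑ l ∈ Finset.range L,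
            (S : ℂ) * (if (S : ℤ) ∣ (k : ℤ) - l then b k * (starRingEnd ℂ) (b l) else 0) := by
          refine Finset.sum_congr rfl fun k _ => Finset.sum_congr rfl fun l _ => ?_
          rw [hgeom]
          split_ifs <;> ring
      _ = (S : ℂ) * ∑ p ∈ Finset.range L ×ˢ Finset.range L,
            (if (S : ℤ) ∣ (p.1 : ℤ) - p.2 then b p.1 * (starRingEnd ℂ) (b p.2) else 0) := by
          rw [Finset.mul_sum, Finset.sum_product]
      _ = (S : ℂ) * ((L : ℂ) + ((starRingEnd ℂ) (∑ τ ∈ (Finset.Ioo 0 L).filter (fun τ => S ∣ τ), aacf L b τ)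
            + ∑ τ ∈ (Finset.Ioo 0 L).filter (fun τ => S ∣ τ), aacf L b τ)) := by
          congr 1
          rw [split3]
          have hdiag : ∑ p ∈ ((Finset.range L ×ˢ Finset.range L).filter
              (fun p => ¬ p.2 < p.1 ∧ ¬ p.1 < p.2)),
              (if (S : ℤ) ∣ (p.1 : ℤ) - p.2 then b p.1 * (starRingEnd ℂ) (b p.2) else 0)
              = (L : ℂ) := by
            rw [diag_sum L (fun k l => if (S : ℤ) ∣ (k : ℤ) - l then b k * (starRingEnd ℂ) (b l) else 0)]
            have : ∀ k ∈ Finset.range L,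
                (if (S : ℤ) ∣ (k : ℤ) - k then b k * (starRingEnd ℂ) (b k) else 0) = 1 := by
              intro k hk
              rw [if_pos (by simp)]
              rw [Complex.mul_conj]
              have : ‖b k‖ = 1 := by
                simp only [hb, norm_mul, norm_pow, hz, hunit k (Finset.mem_range.mp hk), one_pow, mul_one]
              rw [Complex.normSq_eq_norm_sq, this]
              norm_num
            rw [Finset.sum_congr rfl this]
            simp
          have hlt : ∑ p ∈ ((Finset.range L ×ˢ Finset.range L).filter (fun p => p.2 < p.1)),
              (if (S : ℤ) ∣ (p.1 : ℤ) - p.2 then b p.1 * (starRingEnd ℂ) (b p.2) else 0)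
              = (starRingEnd ℂ) (∑ τ ∈ (Finset.Ioo 0 L).filter (fun τ => S ∣ τ), aacf L b τ) := by
            rw [tri L (fun k l => if (S : ℤ) ∣ (k : ℤ) - l then b k * (starRingEnd ℂ) (b l) else 0)]
            rw [map_sum, Finset.sum_filter]
            refine Finset.sum_congr rfl fun τ _ => ?_
            have hc : ∀ i : ℕ, ((S : ℤ) ∣ ((i + τ : ℕ) : ℤ) - (i : ℤ)) ↔ S ∣ τ := by
              intro i
              have : ((i + τ : ℕ) : ℤ) - (i : ℤ) = (τ : ℤ) := by push_cast; ring
              rw [this, Int.natCast_dvd_natCast]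
            by_cases h : S ∣ τ
            · rw [if_pos h, aacf, map_sum]
              refine Finset.sum_congr rfl fun i _ => ?_
              rw [if_pos ((hc i).mpr h)]
              simp only [map_mul, Complex.conj_conj]
              ring
            · rw [if_neg h]
              refine Finset.sum_eq_zero fun i _ => ?_
              rw [if_neg (fun hd => h ((hc i).mp hd))]
          have hgt : ∑ p ∈ ((Finset.range L ×ˢ Finset.range L).filter (fun p => p.1 < p.2)),
              (if (S : ℤ) ∣ (p.1 : ℤ) - p.2 then b p.1 * (starRingEnd ℂ) (b p.2) else 0)
              = ∑ τ ∈ (Finset.Ioo 0 L).filter (fun τ => S ∣ τ), aacf L b τ := by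
            rw [swap_tri L (fun k l => if (S : ℤ) ∣ (k : ℤ) - l then b k * (starRingEnd ℂ) (b l) else 0)]
            rw [tri L (fun k l => if (S : ℤ) ∣ (l : ℤ) - k then b l * (starRingEnd ℂ) (b k) else 0)]
            rw [Finset.sum_filter]
            refine Finset.sum_congr rfl fun τ _ => ?_
            have hc : ∀ i : ℕ, ((S : ℤ) ∣ (i : ℤ) - ((i + τ : ℕ) : ℤ)) ↔ S ∣ τ := by
              intro i
              have : (i : ℤ) - ((i + τ : ℕ) : ℤ) = -(τ : ℤ) := by push_cast; ring
              rw [this, dvd_neg, Int.natCast_dvd_natCast]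
            by_cases h : S ∣ τ
            · rw [if_pos h, aacf]
              refine Finset.sum_congr rfl fun i _ => ?_
              rw [if_pos ((hc i).mpr h)]
            · rw [if_neg h]
              refine Finset.sum_eq_zero fun i _ => ?_
              rw [if_neg (fun hd => h ((hc i).mp hd))]
            
          rw [hdiag, hlt, hgt]
          ring
  -- final assembly
  have hW : ∀ u : ℕ, ∑ k ∈ Finset.range L, a k * ζ ^ (k * u) * z ^ k
      = ∑ k ∈ Finset.range L, b k * ζ ^ (k * u) := by
    intro u
    refine Finset.sum_congr rfl fun k _ => ?_
    simp only [hb]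
    ring
  have habs : ∀ w : ℂ, ‖w‖ ^ 2 = (w * (starRingEnd ℂ) w).re := by
    intro w
    rw [Complex.mul_conj, Complex.normSq_eq_norm_sq]
    exact (Complex.ofReal_re _).symm
  have hTb : ∑ τ ∈ (Finset.Ioo 0 L).filter (fun τ => S ∣ τ), aacf L b τ = T := by
    exact Finset.sum_congr rfl fun τ _ => haacfb τ
  calc ∑ u ∈ Finset.range S,
        ‖∑ k ∈ Finset.range L, a k * ζ ^ (k * u) * z ^ k‖ ^ 2
      = ∑ u ∈ Finset.range S, ((∑ k ∈ Finset.range L, b k * ζ ^ (k * u)) *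
          (starRingEnd ℂ) (∑ k ∈ Finset.range L, b k * ζ ^ (k * u))).re := by
        refine Finset.sum_congr rfl fun u _ => ?_
        rw [hW u, habs]
    _ = (∑ u ∈ Finset.range S, (∑ k ∈ Finset.range L, b k * ζ ^ (k * u)) *
          (starRingEnd ℂ) (∑ k ∈ Finset.range L, b k * ζ ^ (k * u))).re := by
        rw [Complex.re_sum]
    _ = ((S : ℂ) * ((L : ℂ) + ((starRingEnd ℂ) T + T))).re := by rw [key, hTb]
    _ = (L : ℝ) * S + 2 * S * T.re := by
        simp [Complex.mul_re, Complex.add_re, Complex.add_im, Complex.conj_re, Complex.conj_im]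
        ring
end

section
/- Let p be a prime, m ≥ 1 and 1 ≤ s ≤ m integers, λ a positive integer with p ∣ λ, and π a permutation of {s, s+1, …, m}. Fix g_1, …, g_m, g ∈ ℤ_λ and an arbitrary function h : ℤ_p^{s−1} → ℤ_λ (with h = 0 when s = 1). Define f : ℤ_p^m → ℤ_λ by f(v_1, …, v_m) = (λ/p)·Σ_{i=s}^{m−1} v_{π(i)} v_{π(i+1)} + Σ_{i=1}^{m} g_i v_i + g + h(v_1, …, v_{s−1}) (mod λ), and for each γ ∈ ℤ_p define a^γ = f + (λ/p)·v_{π(s)}·γ (mod λ). Let i and j be integers in {0, …, p^m − 1} with base-p digit vectors (i_1, …, i_m) and (j_1, …, j_m) such that i_{π(s)} = j_{π(s)} and such that i_{π(l)} ≠ j_{π(l)} for some l ∈ {s+1, …, m}; let φ be the smallest such l (so φ − 1 ≥ s and i_{π(l')} = j_{π(l')} for all l' ∈ {s, …, φ−1}). For each δ ∈ {1, …, p−1}, let i^δ (respectively j^δ) be the integer in {0, …, p^m − 1} obtained from i (respectively j) by replacing the digit in position π(φ−1) by (i_{π(φ−1)} − δ) mod p (respectively (j_{π(φ−1)} − δ)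 mod p), leaving all other digits unchanged. Then for every γ ∈ ℤ_p, Σ_{δ=1}^{p−1} ω_λ^{a^γ(i^δ digits) − a^γ(j^δ digits)} + ω_λ^{a^γ(i_1,…,i_m) − a^γ(j_1,…,j_m)} = 0, where ω_λ = exp(2π√−1/λ). -/
open Finset

/-- `eZMod q x = ω_q^x` where `ω_q = exp(2π√-1/q)`. -/
noncomputable def eZMod (q : ℕ) (x : ZMod q) : ℂ :=
  Complex.exp (2 * (Real.pi : ℂ) * Complex.I * (x.val : ℂ) / (q : ℂ))

/-- `dig p i k` is the `k`-th base-`p` digit (1-indexed) of `i`, viewed in `ℤ_p`. -/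
def dig (p i : ℕ) (k : ℕ) : ZMod p :=
  (((i / p ^ (k - 1)) % p : ℕ) : ZMod p)

lemma eZMod_natCast (q : ℕ) (hq : 0 < q) (n : ℕ) :
    eZMod q ((n : ZMod q)) = Complex.exp (2 * (Real.pi : ℂ) * Complex.I * (n : ℂ) / (q : ℂ)) := by
  haveI : NeZero q := ⟨hq.ne'⟩
  unfold eZMod
  rw [ZMod.val_natCast]
  have hq' : (q : ℂ) ≠ 0 := Nat.cast_ne_zero.mpr hq.ne'
  have hn : (n : ℂ) = (q : ℂ) * ((n / q : ℕ) : ℂ) + ((n % q : ℕ) : ℂ) := by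
    exact_mod_cast (Nat.div_add_mod n q).symm
  have split : 2 * (Real.pi : ℂ) * Complex.I * (n : ℂ) / (q : ℂ)
      = ((n / q : ℕ) : ℂ) * (2 * (Real.pi : ℂ) * Complex.I)
        + 2 * (Real.pi : ℂ) * Complex.I * ((n % q : ℕ) : ℂ) / (q : ℂ) := by
    rw [hn]; field_simp
  rw [split, Complex.exp_add, Complex.exp_nat_mul, Complex.exp_two_pi_mul_I, one_pow, one_mul]

lemma eZMod_add (q : ℕ) (hq : 0 < q) (x y : ZMod q) :
    eZMod q (x + y) = eZMod q x * eZMod q y := by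
  haveI : NeZero q := ⟨hq.ne'⟩
  have hx : ((x.val : ℕ) : ZMod q) = x := by simp [ZMod.natCast_val, ZMod.cast_id]
  have hy : ((y.val : ℕ) : ZMod q) = y := by simp [ZMod.natCast_val, ZMod.cast_id]
  have hxy : x + y = (((x.val + y.val : ℕ)) : ZMod q) := by push_cast [hx, hy]; ring
  rw [hxy, eZMod_natCast q hq]
  have hq' : (q : ℂ) ≠ 0 := Nat.cast_ne_zero.mpr hq.ne'
  unfold eZMod
  rw [← Complex.exp_add]
  congr 1
  push_cast
  field_simp
theorem stmt10 (p m s lam : ℕ) (hp : p.Prime) (hm : 1 ≤ m) (hs : 1 ≤ s) (hsm : s ≤ m)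
    (hlam : 0 < lam) (hpl : p ∣ lam)
    (π : Equiv.Perm ℕ) (hπ : ∀ i ∈ Finset.Icc s m, π i ∈ Finset.Icc s m)
    (g : ℕ → ZMod lam) (g₀ : ZMod lam)
    (h : (ℕ → ZMod p) → ZMod lam)
    (hdep : ∀ u w : ℕ → ZMod p, (∀ t, 1 ≤ t → t ≤ s - 1 → u t = w t) → h u = h w)
    (hs1 : s = 1 → ∀ u, h u = 0)
    (f : (ℕ → ZMod p) → ZMod lam)
    (hf : ∀ v : ℕ → ZMod p,
      f v = ((lam / p : ℕ) : ZMod lam) *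
            (∑ i ∈ Finset.Ico s m, ((v (π i)).val : ZMod lam) * ((v (π (i + 1))).val : ZMod lam))
        + ∑ i ∈ Finset.Icc 1 m, g i * ((v i).val : ZMod lam) + g₀ + h v)
    (a : ZMod p → (ℕ → ZMod p) → ZMod lam)
    (ha : ∀ (γ : ZMod p) (v : ℕ → ZMod p),
      a γ v = f v + ((lam / p : ℕ) : ZMod lam) * ((v (π s)).val : ZMod lam) * (γ.val : ZMod lam))
    (i j : ℕ) (hi : i < p ^ m) (hj : j < p ^ m)
    (heq : dig p i (π s) = dig p j (π s))
    (φ : ℕ) (hφmem : φ ∈ Finset.Icc (s + 1) m)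
    (hφne : dig p i (π φ) ≠ dig p j (π φ))
    (hφmin : ∀ l ∈ Finset.Icc s (φ - 1), dig p i (π l) = dig p j (π l)) :
    ∀ γ : ZMod p,
      (∑ δ ∈ Finset.Icc 1 (p - 1),
        eZMod lam
          (a γ (Function.update (dig p i) (π (φ - 1))
              (dig p i (π (φ - 1)) - (δ : ZMod p)))
           - a γ (Function.update (dig p j) (π (φ - 1))
              (dig p j (π (φ - 1)) - (δ : ZMod p)))))
      + eZMod lam (a γ (dig p i) - a γ (dig p j)) = 0 := by
  intro γ
  haveI : NeZero p := ⟨hp.ne_zero⟩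
  haveI : Fact p.Prime := ⟨hp⟩
  haveI : NeZero lam := ⟨hlam.ne'⟩
  have hp1 : 1 < p := hp.one_lt
  obtain ⟨hφ1, hφ2⟩ := Finset.mem_Icc.mp hφmem
  set N : ℕ := lam / p with hN
  have hNp : N * p = lam := Nat.div_mul_cancel hpl
  have hNpos : 0 < N := Nat.div_pos (Nat.le_of_dvd hlam hpl) hp.pos
  -- the additive map ψ
  set ψ0 : ZMod p → ZMod lam := fun t => ((N * t.val : ℕ) : ZMod lam) with hψ0
  have psi_mod : ∀ n : ℕ, ((N * n : ℕ) : ZMod lam) = ψ0 ((n : ZMod p)) := by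
    intro n
    simp only [hψ0, ZMod.val_natCast]
    conv_lhs => rw [← Nat.div_add_mod n p]
    have e1 : N * (p * (n / p) + n % p) = lam * (n / p) + N * (n % p) := by
      rw [← hNp]; ring
    rw [e1]
    push_cast
    simp [ZMod.natCast_self]
  have psi_add : ∀ u v : ZMod p, ψ0 (u + v) = ψ0 u + ψ0 v := by
    intro u v
    have h1 : u + v = (((u.val + v.val : ℕ)) : ZMod p) := by
      push_cast [ZMod.natCast_val, ZMod.cast_id]
      ring
    rw [h1, ← psi_mod]
    simp only [hψ0]
    push_cast
    ring
  set ψ : ZMod p →+ ZMod lam := AddMonoidHom.mk' ψ0 psi_add with hψ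
  have psi_mul : ∀ u v : ZMod p,
      ((N : ℕ) : ZMod lam) * (((u.val : ℕ) : ZMod lam) * ((v.val : ℕ) : ZMod lam)) = ψ (u * v) := by
    intro u v
    have h1 : u * v = (((u.val * v.val : ℕ)) : ZMod p) := by
      push_cast [ZMod.natCast_val, ZMod.cast_id]
      ring
    have : ψ (u * v) = ((N * (u.val * v.val) : ℕ) : ZMod lam) := by
      rw [h1, hψ]; exact (psi_mod _).symm
    rw [this]; push_cast; ring
  -- rewriting a
  have ha' : ∀ v : ℕ → ZMod p,
      a γ v = (∑ k ∈ Finset.Ico s m, ψ (v (π k) * v (π (k + 1))))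
        + (∑ k ∈ Finset.Icc 1 m, g k * ((v k).val : ZMod lam)) + g₀ + h v
        + ψ (v (π s) * γ) := by
    intro v
    rw [ha, hf]
    have h1 : ((N : ℕ) : ZMod lam) *
        (∑ k ∈ Finset.Ico s m, ((v (π k)).val : ZMod lam) * ((v (π (k + 1))).val : ZMod lam))
        = ∑ k ∈ Finset.Ico s m, ψ (v (π k) * v (π (k + 1))) := by
      rw [Finset.mul_sum]
      exact Finset.sum_congr rfl fun k _ => psi_mul _ _
    have h2 : ((N : ℕ) : ZMod lam) * ((v (π s)).val : ZMod lam) * ((γ.val : ℕ) : ZMod lam)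
        = ψ (v (π s) * γ) := by
      rw [mul_assoc]; exact psi_mul _ _
    rw [h1, h2]
  -- abbreviations
  set x : ℕ → ZMod p := dig p i with hx
  set y : ℕ → ZMod p := dig p j with hy
  set q : ℕ := π (φ - 1) with hq
  have hπinj : Function.Injective π := π.injective
  have hqs : s ≤ q := by
    have := hπ (φ - 1) (Finset.mem_Icc.mpr ⟨by omega, by omega⟩)
    exact (Finset.mem_Icc.mp this).1
  have hxyq : x q = y q := hφmin (φ - 1) (Finset.mem_Icc.mpr ⟨by omega, le_refl _⟩)
  set c : ZMod p := x (π φ) - y (π φ) with hc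
  have hcne : c ≠ 0 := sub_ne_zero.mpr hφne
  -- the key difference identity
  have key : ∀ δ : ZMod p,
      a γ (Function.update x q (x q - δ)) - a γ (Function.update y q (y q - δ))
        = (a γ x - a γ y) + ψ (-δ * c) := by
    intro δ
    set u : ℕ → ZMod p := Function.update x q (x q - δ) with hu
    set w : ℕ → ZMod p := Function.update y q (y q - δ) with hw
    have huk : ∀ k, k ≠ q → u k = x k := fun k hk => Function.update_of_ne hk _ _
    have hwk : ∀ k, k ≠ q → w k = y k := fun k hk => Function.update_of_ne hk _ _
    have huq : u q = x q - δ := Function.update_self _ _ _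
    have hwq : w q = y q - δ := Function.update_self _ _ _
    -- h-terms
    have hhu : h u = h x := by
      apply hdep
      intro t ht1 ht2
      exact huk t (by omega)
    have hhw : h w = h y := by
      apply hdep
      intro t ht1 ht2
      exact hwk t (by omega)
    -- gamma term
    have huws : u (π s) = w (π s) := by
      by_cases hsq : π s = q
      · rw [hsq, huq, hwq, hxyq]
      · rw [huk _ hsq, hwk _ hsq]
        exact hφmin s (Finset.mem_Icc.mpr ⟨le_refl _, by omega⟩)
    -- linear terms
    have E2 : (∑ k ∈ Finset.Icc 1 m, g k * ((u k).val : ZMod lam))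
        - (∑ k ∈ Finset.Icc 1 m, g k * ((w k).val : ZMod lam))
        - (∑ k ∈ Finset.Icc 1 m, g k * ((x k).val : ZMod lam))
        + (∑ k ∈ Finset.Icc 1 m, g k * ((y k).val : ZMod lam)) = 0 := by
      rw [← Finset.sum_sub_distrib, ← Finset.sum_sub_distrib, ← Finset.sum_add_distrib]
      apply Finset.sum_eq_zero
      intro k _
      by_cases hkq : k = q
      · subst hkq
        rw [huq, hwq, hxyq]
        ring
      · rw [huk _ hkq, hwk _ hkq]
        ring
    -- quadratic terms
    have E1 : (∑ k ∈ Finset.Ico s m, ψ (u (π k) * u (π (k + 1))))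
        - (∑ k ∈ Finset.Ico s m, ψ (w (π k) * w (π (k + 1))))
        - (∑ k ∈ Finset.Ico s m, ψ (x (π k) * x (π (k + 1))))
        + (∑ k ∈ Finset.Ico s m, ψ (y (π k) * y (π (k + 1)))) = ψ (-δ * c) := by
      rw [← Finset.sum_sub_distrib, ← Finset.sum_sub_distrib, ← Finset.sum_add_distrib]
      rw [Finset.sum_eq_single (φ - 1)]
      · have hπk : π (φ - 1) = q := rfl
        have hsucc : φ - 1 + 1 = φ := by omega
        have hφq : π φ ≠ q := fun hh => by
          have := hπinj hh; omega
        rw [hsucc, hπk, huq, hwq, huk _ hφq, hwk _ hφq, hxyq]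
        rw [← map_sub, ← map_sub, ← map_add]
        congr 1
        ring
      · intro k hk hkne
        obtain ⟨hks, hkm⟩ := Finset.mem_Ico.mp hk
        have hπk : π k ≠ q := fun hh => hkne (hπinj hh)
        rw [huk _ hπk, hwk _ hπk]
        by_cases hk1 : π (k + 1) = q
        · have hk1' : k + 1 = φ - 1 := hπinj hk1
          have hxyk : x (π k) = y (π k) := hφmin k (Finset.mem_Icc.mpr ⟨hks, by omega⟩)
          rw [hk1, huq, hwq, hxyq, hxyk]
          ring
        · rw [huk _ hk1, hwk _ hk1]
          ring
      · intro hne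
        exact absurd (Finset.mem_Ico.mpr ⟨by omega, by omega⟩) hne
    rw [ha' u, ha' w, ha' x, ha' y, hhu, hhw, huws, heq]
    linear_combination E1 + E2
  -- now the complex sum
  set D0 : ZMod lam := a γ x - a γ y with hD0
  have h0 : eZMod lam D0 = eZMod lam (D0 + ψ (-((0 : ℕ) : ZMod p) * c)) := by
    norm_num
  have hrange : ∀ (G : ZMod p → ℂ),
      ∑ δ ∈ Finset.range p, G ((δ : ZMod p)) = ∑ t : ZMod p, G t := by
    intro G
    apply Finset.sum_nbij' (f := fun δ : ℕ => G ((δ : ZMod p))) (g := G)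
      (i := fun δ : ℕ => ((δ : ZMod p))) (j := fun t : ZMod p => t.val)
    · intro a _; exact Finset.mem_univ _
    · intro t _; exact Finset.mem_range.mpr (ZMod.val_lt t)
    · intro a ha'; simp [ZMod.val_natCast, Nat.mod_eq_of_lt (Finset.mem_range.mp ha')]
    · intro t _; simp [ZMod.natCast_val, ZMod.cast_id]
    · intro a _; rfl
  have hinsert : Finset.range p = insert 0 (Finset.Icc 1 (p - 1)) := by
    ext k
    simp only [Finset.mem_range, Finset.mem_insert, Finset.mem_Icc]
    omega
  have step1 : ∀ T : ℕ → ℂ,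
      ∑ δ ∈ Finset.range p, T δ = (∑ δ ∈ Finset.Icc 1 (p - 1), T δ) + T 0 := by
    intro T
    rw [hinsert, Finset.sum_insert (by simp)]
    exact add_comm _ _
  have hpsi_e : ∀ t : ZMod p, eZMod lam (ψ t) = eZMod p t := by
    intro t
    have hval : (ψ t).val = N * t.val := by
      show ((N * t.val : ℕ) : ZMod lam).val = N * t.val
      rw [ZMod.val_natCast, Nat.mod_eq_of_lt]
      calc N * t.val < N * p := (Nat.mul_lt_mul_left hNpos).mpr (ZMod.val_lt t)
        _ = lam := hNp
    show Complex.exp _ = Complex.exp _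
    rw [hval]
    congr 1
    have hpc : (p : ℂ) ≠ 0 := Nat.cast_ne_zero.mpr hp.ne_zero
    have hNc : (N : ℂ) ≠ 0 := Nat.cast_ne_zero.mpr hNpos.ne'
    have hlc : ((lam : ℕ) : ℂ) = (N : ℂ) * (p : ℂ) := by rw [← hNp]; push_cast; ring
    rw [hlc]
    push_cast
    field_simp
  have hzeta : ∀ t : ZMod p,
      eZMod p t = Complex.exp (2 * (Real.pi : ℂ) * Complex.I / p) ^ t.val := by
    intro t
    show Complex.exp _ = _
    rw [← Complex.exp_nat_mul]
    congr 1
    ring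
  have hsum_univ : ∑ t : ZMod p, eZMod p t = 0 := by
    rw [← hrange (fun t => eZMod p t)]
    have hz := (Complex.isPrimitiveRoot_exp p hp.ne_zero).geom_sum_eq_zero hp1
    rw [← hz]
    apply Finset.sum_congr rfl
    intro δ hδ
    rw [hzeta, ZMod.val_natCast, Nat.mod_eq_of_lt (Finset.mem_range.mp hδ)]
  have hreindex : ∑ t : ZMod p, eZMod lam (ψ (-t * c)) = ∑ t : ZMod p, eZMod lam (ψ t) := by
    apply Fintype.sum_equiv ((Equiv.neg (ZMod p)).trans (Equiv.mulRight₀ c hcne))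
    intro t
    simp [Equiv.trans_apply, Equiv.mulRight₀]
  rw [h0]
  simp only [key]
  rw [← step1 (fun δ => eZMod lam (D0 + ψ (-((δ : ℕ) : ZMod p) * c)))]
  simp only [eZMod_add lam hlam]
  rw [← Finset.mul_sum, hrange (fun t => eZMod lam (ψ (-t * c))), hreindex]
  rw [show (∑ t : ZMod p, eZMod lam (ψ t)) = 0 from by
    rw [← hsum_univ]; exact Finset.sum_congr rfl fun t _ => hpsi_e t]
  exact mul_zero _
end
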